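/- The tropical linear differential equation P = min_{0≤i≤k}{u^(i)} (all coefficients a_i = 0) has exactly the sets {j, l} with 0 ≤ j < l ≤ k as its minimal tropical solutions; in particular it has k(k+1)/2 minimal solutions. -/
import Mathlib


/-- `tval S i` = min { s - i : s ∈ S, s ≥ i }, as an extended real (⊤ if no such s). -/
noncomputable def tval (S : Set ℕ) (i : ℕ) : EReal :=
  ⨅ (d : ℕ) (_ : i + d ∈ S), ((d : ℝ) : EReal)

/-- The term `a_i + val_S(i)` of the tropical linear differential equation. -/
noncomputable def tterm (a : ℕ → ℤ) (S : Set ℕ) (i : ℕ) : EReal :=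
  ((a i : ℝ) : EReal) + tval S i

/-- `min_{0 ≤ i ≤ k} { a_i + val_S(i) }`. -/
noncomputable def tmin (k : ℕ) (a : ℕ → ℤ) (S : Set ℕ) : EReal :=
  ⨅ i ∈ Finset.range (k + 1), tterm a S i

/-- `S` is a tropical solution: the minimum is attained at least twice
(this also covers the case where the minimum is `∞`, since `k ≥ 1`). -/
def IsSol (k : ℕ) (a : ℕ → ℤ) (S : Set ℕ) : Prop :=
  ∃ i ∈ Finset.range (k + 1), ∃ j ∈ Finset.range (k + 1),
    i ≠ j ∧ tterm a S i = tmin k a S ∧ tterm a S j = tmin k a S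

/-- A minimal tropical solution: nonempty, a solution, and no nonempty proper
subset is a solution. -/
def IsMinSol (k : ℕ) (a : ℕ → ℤ) (S : Set ℕ) : Prop :=
  S.Nonempty ∧ IsSol k a S ∧ ∀ T ⊆ S, T.Nonempty → IsSol k a T → T = S

lemma tterm_zero (S : Set ℕ) (i : ℕ) : tterm (fun _ => 0) S i = tval S i := by
  simp [tterm]

lemma tval_nonneg (S : Set ℕ) (i : ℕ) : 0 ≤ tval S i :=
  le_iInf fun d => le_iInf fun _ => by exact_mod_cast (Nat.cast_nonneg d : (0:ℝ) ≤ d)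

lemma tval_le (S : Set ℕ) {i d : ℕ} (h : i + d ∈ S) : tval S i ≤ ((d : ℝ) : EReal) :=
  iInf_le_of_le d (iInf_le _ h)

lemma tval_of_mem (S : Set ℕ) {i : ℕ} (h : i ∈ S) : tval S i = 0 := by
  refine le_antisymm ?_ (tval_nonneg S i)
  simpa using tval_le S (d := 0) (by simpa using h)

lemma tval_of_notMem (S : Set ℕ) {i : ℕ} (h : i ∉ S) : 1 ≤ tval S i := by
  refine le_iInf fun d => le_iInf fun hd => ?_
  have hd1 : 1 ≤ d := by
    rcases Nat.eq_zero_or_pos d with h0 | h0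
    · exact absurd (by simpa [h0] using hd) h
    · exact h0
  exact_mod_cast (by exact_mod_cast hd1 : (1:ℝ) ≤ d)

lemma mem_of_tval_eq_zero (S : Set ℕ) {i : ℕ} (h : tval S i = 0) : i ∈ S := by
  by_contra hc
  have := tval_of_notMem S hc
  rw [h] at this
  exact absurd this (by norm_num)

lemma tval_eq (S : Set ℕ) {i d : ℕ} (hd : i + d ∈ S) (hmin : ∀ e < d, i + e ∉ S) :
    tval S i = ((d : ℝ) : EReal) := by
  refine le_antisymm (tval_le S hd) (le_iInf fun e => le_iInf fun he => ?_)
  have : d ≤ e := by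
    by_contra hc
    exact hmin e (by omega) he
  exact_mod_cast (by exact_mod_cast this : (d:ℝ) ≤ e)

lemma tmin_le (k : ℕ) (a : ℕ → ℤ) (S : Set ℕ) {i : ℕ} (hi : i ≤ k) :
    tmin k a S ≤ tterm a S i :=
  iInf_le_of_le i (iInf_le _ (Finset.mem_range.2 (by omega)))

lemma tmin_nonneg (k : ℕ) (S : Set ℕ) : 0 ≤ tmin k (fun _ => 0) S :=
  le_iInf fun i => le_iInf fun _ => by rw [tterm_zero]; exact tval_nonneg S i

lemma sol_iff (k : ℕ) (S : Set ℕ) (hS : S.Nonempty) :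
    IsSol k (fun _ => 0) S ↔ ∃ p q, p ≠ q ∧ p ≤ k ∧ q ≤ k ∧ p ∈ S ∧ q ∈ S := by
  constructor
  · rintro ⟨i, hi, j, hj, hij, hti, htj⟩
    rw [Finset.mem_range] at hi hj
    by_cases hA : ∃ s ∈ S, s ≤ k
    · obtain ⟨p, hp, hpk⟩ := hA
      have hmin0 : tmin k (fun _ => 0) S = 0 := by
        refine le_antisymm ?_ (tmin_nonneg k S)
        have := tmin_le k (fun _ => 0) S hpk
        rwa [tterm_zero, tval_of_mem S hp] at this
      have hiS : i ∈ S := mem_of_tval_eq_zero S (by rw [← tterm_zero S i, hti, hmin0])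
      have hjS : j ∈ S := mem_of_tval_eq_zero S (by rw [← tterm_zero S j, htj, hmin0])
      exact ⟨i, j, hij, by omega, by omega, hiS, hjS⟩
    · push_neg at hA
      set m := sInf S with hm
      have hmS : m ∈ S := Nat.sInf_mem hS
      have hmk : k < m := hA m hmS
      have hval : ∀ n ≤ k, tval S n = (((m - n : ℕ) : ℝ) : EReal) := by
        intro n hn
        refine tval_eq S (by rwa [Nat.add_sub_cancel' (by omega)]) fun e he hc => ?_
        have := Nat.sInf_le hc
        omega
      exfalso
      have : tval S i = tval S j := by
        rw [← tterm_zero S i, ← tterm_zero S j, hti, htj]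
      rw [hval i (by omega), hval j (by omega)] at this
      have : (m - i : ℕ) = (m - j : ℕ) := by exact_mod_cast this
      omega
  · rintro ⟨p, q, hpq, hpk, hqk, hpS, hqS⟩
    have hmin0 : tmin k (fun _ => 0) S = 0 := by
      refine le_antisymm ?_ (tmin_nonneg k S)
      have := tmin_le k (fun _ => 0) S hpk
      rwa [tterm_zero, tval_of_mem S hpS] at this
    exact ⟨p, Finset.mem_range.2 (by omega), q, Finset.mem_range.2 (by omega), hpq,
      by rw [tterm_zero, tval_of_mem S hpS, hmin0],
      by rw [tterm_zero, tval_of_mem S hqS, hmin0]⟩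

lemma minsol_iff (k : ℕ) (S : Set ℕ) :
    IsMinSol k (fun _ => 0) S ↔ ∃ j l : ℕ, j < l ∧ l ≤ k ∧ S = {j, l} := by
  constructor
  · rintro ⟨hne, hsol, hmin⟩
    obtain ⟨p, q, hpq, hpk, hqk, hpS, hqS⟩ := (sol_iff k S hne).1 hsol
    set j := min p q
    set l := max p q
    have hjl : j < l := by omega
    have hjS : j ∈ S := by rcases min_choice p q with h | h <;> simp [j, h, hpS, hqS]
    have hlS : l ∈ S := by rcases max_choice p q with h | h <;> simp [l, h, hpS, hqS]
    refine ⟨j, l, hjl, by omega, ?_⟩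
    have hsub : ({j, l} : Set ℕ) ⊆ S := by
      rintro x (rfl | rfl) <;> assumption
    have := hmin {j, l} hsub ⟨j, by simp⟩ ((sol_iff k {j, l} ⟨j, by simp⟩).2
      ⟨j, l, by omega, by omega, by omega, by simp, by simp⟩)
    exact this.symm
  · rintro ⟨j, l, hjl, hlk, rfl⟩
    refine ⟨⟨j, by simp⟩, (sol_iff k {j, l} ⟨j, by simp⟩).2
      ⟨j, l, by omega, by omega, by omega, by simp, by simp⟩, ?_⟩
    intro T hT hTne hTsol
    obtain ⟨p, q, hpq, hpk, hqk, hpT, hqT⟩ := (sol_iff k T hTne).1 hTsol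
    have hp' : p ∈ ({j, l} : Set ℕ) := hT hpT
    have hq' : q ∈ ({j, l} : Set ℕ) := hT hqT
    refine Set.Subset.antisymm hT ?_
    rintro x (rfl | rfl)
    · rcases hp' with rfl | rfl
      · exact hpT
      · rcases hq' with rfl | rfl
        · exact hqT
        · exact absurd rfl hpq
    · rcases hp' with rfl | rfl
      · rcases hq' with rfl | rfl
        · exact absurd rfl hpq
        · exact hqT
      · exact hpT

lemma pair_set_eq (k : ℕ) :
    {S : Set ℕ | ∃ j l : ℕ, j < l ∧ l ≤ k ∧ S = {j, l}}
      = (fun t : Finset ℕ => (↑t : Set ℕ)) '' ↑((Finset.range (k + 1)).powersetCard 2) := by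
  ext S
  constructor
  · rintro ⟨j, l, hjl, hlk, rfl⟩
    refine ⟨{j, l}, ?_, by simp⟩
    rw [Finset.mem_coe, Finset.mem_powersetCard]
    constructor
    · intro x hx
      simp only [Finset.mem_insert, Finset.mem_singleton] at hx
      rcases hx with rfl | rfl <;> exact Finset.mem_range.2 (by omega)
    · rw [Finset.card_insert_of_notMem (by simp [Nat.ne_of_lt hjl]), Finset.card_singleton]
  · rintro ⟨t, ht, rfl⟩
    rw [Finset.mem_coe, Finset.mem_powersetCard] at ht
    obtain ⟨a, b, hab, rfl⟩ := Finset.card_eq_two.1 ht.2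
    have ha : a < k + 1 := Finset.mem_range.1 (ht.1 (by simp))
    have hb : b < k + 1 := Finset.mem_range.1 (ht.1 (by simp))
    rcases lt_or_gt_of_ne hab with h | h
    · exact ⟨a, b, h, by omega, by simp⟩
    · exact ⟨b, a, h, by omega, by simp [Set.pair_comm a b]⟩

/-- for `P = min_{0 ≤ i ≤ k} {u^(i)}` the minimal tropical
solutions are exactly the sets `{j, l}` with `0 ≤ j < l ≤ k`; in particular
there are `k(k+1)/2` of them. -/
theorem stmt13 (k : ℕ) (hk : 1 ≤ k) :
    {S : Set ℕ | IsMinSol k (fun _ => 0) S}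
        = {S : Set ℕ | ∃ j l : ℕ, j < l ∧ l ≤ k ∧ S = {j, l}} ∧
      {S : Set ℕ | IsMinSol k (fun _ => 0) S}.ncard = k * (k + 1) / 2 := by
  have hset : {S : Set ℕ | IsMinSol k (fun _ => 0) S}
      = {S : Set ℕ | ∃ j l : ℕ, j < l ∧ l ≤ k ∧ S = {j, l}} := by
    ext S; exact minsol_iff k S
  refine ⟨hset, ?_⟩
  rw [hset, pair_set_eq k,
    Set.ncard_image_of_injOn (Finset.coe_injective.injOn),
    Set.ncard_coe_finset, Finset.card_powersetCard, Finset.card_range,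
    Nat.choose_two_right, Nat.add_sub_cancel, Nat.mul_comm]
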